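/- Let K be a field, A an associative unital K-algebra and E a projective right A-module with dual basis {e_i}_{i∈I} ⊆ E and {ε^i}_{i∈I} ⊆ Hom_A(E,A), so that each e ∈ E satisfies e = Σ_{i∈I} e_i · ε^i(e) with only finitely many ε^i(e) nonzero. For k ≥ 1 define h^k : HC^k(A, End_K(E)) → HC^{k−1}(A, End_K(E)) by (h^k φ)(a_1,…,a_{k−1})(e) = Σ_{i∈I} φ(ε^i(e), a_1, …, a_{k−1})(e_i), and set h^0 = 0. Then δ^{k−1} ∘ h^k + h^{k+1} ∘ δ^k = id on HC^k(A, End_K(E)) for all k ≥ 1. Consequently every Hochschild k-cocycle φ (δφ = 0, k ≥ 1) is the coboundary φ = δ(h^k φ), i.e. HH^k(A, End_K(E)) = 0 for all k ≥ 1. -/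

import Mathlib

namespace Stmt14

variable {K : Type*} [Field K] {A : Type*} [Ring A] [Algebra K A]
variable {E : Type*} [AddCommGroup E] [Module K E] [Module Aᵐᵒᵖ E]
variable {ι : Type*}

/-- The Hochschild differential of a `k`-cochain with values in endomorphisms of the right
`A`-module `E` (the right action being `e · a = op a • e`):
`(δφ)(a_1,…,a_{k+1})(e) = φ(a_2,…,a_{k+1})(e·a_1)
  + ∑_{i=1}^{k} (−1)^i φ(a_1,…,a_i a_{i+1},…,a_{k+1})(e)
  + (−1)^{k+1} φ(a_1,…,a_k)(e)·a_{k+1}`. -/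
def hdelM (k : ℕ) (φ : (Fin k → A) → E → E) : (Fin (k+1) → A) → E → E :=
  fun b e =>
    φ (fun j => b j.succ) (MulOpposite.op (b 0) • e)
      + (∑ i : Fin k, ((-1 : ℤ) ^ ((i : ℕ) + 1)) • φ (fun j =>
          if _h1 : (j : ℕ) < (i : ℕ) then b ⟨(j : ℕ), by have := j.isLt; omega⟩
          else if _h2 : (j : ℕ) = (i : ℕ) then
            b ⟨(i : ℕ), by have := i.isLt; omega⟩ * b ⟨(i : ℕ) + 1, by have := i.isLt; omega⟩
          else b ⟨(j : ℕ) + 1, by have := j.isLt; omega⟩) e)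
      + ((-1 : ℤ) ^ (k + 1)) •
          (MulOpposite.op (b (Fin.last k)) • φ (fun j => b j.castSucc) e)

/-- The homotopy `h` built from a dual basis `{e_i}`, `{ε^i}` of a projective right
`A`-module: `(hφ)(a_1,…,a_k)(e) = ∑_i φ(ε^i(e), a_1, …, a_k)(e_i)`. -/
noncomputable def homM (eb : ι → E) (ε : ι → (E →ₗ[K] A)) (k : ℕ)
    (φ : (Fin (k+1) → A) → E → E) : (Fin k → A) → E → E :=
  fun a e => ∑ᶠ i, φ (Fin.cons (ε i e) a) (eb i)

set_option linter.unreachableTactic false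
set_option linter.unusedTactic false

private def mrg {n : ℕ} (i : Fin n) (b : Fin (n+1) → A) : Fin n → A :=
  fun j =>
    if _h1 : (j : ℕ) < (i : ℕ) then b ⟨(j : ℕ), by have := j.isLt; omega⟩
    else if _h2 : (j : ℕ) = (i : ℕ) then
      b ⟨(i : ℕ), by have := i.isLt; omega⟩ * b ⟨(i : ℕ) + 1, by have := i.isLt; omega⟩
    else b ⟨(j : ℕ) + 1, by have := j.isLt; omega⟩

private lemma mrg_cons_zero {n : ℕ} (c : A) (a : Fin (n+1) → A) :
    mrg (0 : Fin (n+1)) (Fin.cons c a) = Fin.cons (c * a 0) (fun j => a j.succ) := by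
  funext j
  obtain ⟨jv, hj⟩ := j
  unfold mrg
  rcases jv with _ | jv
  · simp
  · simp only [Fin.val_mk, Fin.val_zero]
    simp only [show ¬ (jv + 1 < 0) by omega, show ¬ (jv + 1 = 0) by omega, ↓reduceDIte]
    show a ⟨jv + 1, _⟩ = _
    show _ = (Fin.cons (c * a 0) (fun j => a j.succ) : Fin (n+1) → A) ⟨jv+1, hj⟩
    show _ = a (Fin.succ ⟨jv, _⟩)
    rfl

private lemma mrg_cons_succ {n : ℕ} (t : Fin n) (c : A) (a : Fin (n+1) → A) :
    mrg t.succ (Fin.cons c a) = Fin.cons c (mrg t a) := by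
  funext j
  obtain ⟨jv, hj⟩ := j
  unfold mrg
  rcases jv with _ | jv
  · rw [dif_pos (by simp)]
    rfl
  · simp only [Fin.val_mk, Fin.val_succ]
    by_cases h1 : jv + 1 < (t : ℕ) + 1
    · rw [dif_pos h1]
      show a ⟨jv, _⟩ = (Fin.cons c (mrg t a) : Fin (n+1) → A) ⟨jv+1, hj⟩
      show _ = mrg t a ⟨jv, _⟩
      unfold mrg
      rw [dif_pos (by first | omega | (simp only [Fin.val_mk]; omega))]
    · rw [dif_neg h1]
      by_cases h2 : jv + 1 = (t : ℕ) + 1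
      · rw [dif_pos h2]
        show a ⟨(t:ℕ), _⟩ * a ⟨(t:ℕ)+1, _⟩ = (Fin.cons c (mrg t a) : Fin (n+1) → A) ⟨jv+1, hj⟩
        show _ = mrg t a ⟨jv, _⟩
        unfold mrg
        rw [dif_neg (by first | omega | (simp only [Fin.val_mk]; omega)), dif_pos (by first | omega | (simp only [Fin.val_mk]; omega))]
      · rw [dif_neg h2]
        show a ⟨jv+1, _⟩ = (Fin.cons c (mrg t a) : Fin (n+1) → A) ⟨jv+1, hj⟩
        show _ = mrg t a ⟨jv, _⟩
        unfold mrg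
        rw [dif_neg (by first | omega | (simp only [Fin.val_mk]; omega)), dif_neg (by first | omega | (simp only [Fin.val_mk]; omega))]

private lemma cons_castSucc {n : ℕ} (c : A) (a : Fin (n+1) → A) :
    (fun j : Fin (n+1) => (Fin.cons c a : Fin (n+2) → A) j.castSucc)
      = Fin.cons c (fun j : Fin n => a j.castSucc) := by
  funext j
  obtain ⟨jv, hj⟩ := j
  rcases jv with _ | jv
  · rfl
  · show (Fin.cons c a : Fin (n+2) → A) ⟨jv+1, by omega⟩ = _
    rfl

private lemma cons_tail {n : ℕ} (c : A) (a : Fin (n+1) → A) :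
    (fun j : Fin (n+1) => (Fin.cons c a : Fin (n+2) → A) j.succ) = a := by
  funext j; simp

private lemma cons_last {n : ℕ} (c : A) (a : Fin (n+1) → A) :
    (Fin.cons c a : Fin (n+2) → A) (Fin.last (n+1)) = a (Fin.last n) := rfl



private lemma hdelM_eq (k : ℕ) (φ : (Fin k → A) → E → E) (b : Fin (k+1) → A) (e : E) :
    hdelM k φ b e = φ (fun j => b j.succ) (MulOpposite.op (b 0) • e)
      + (∑ i : Fin k, ((-1 : ℤ) ^ ((i : ℕ) + 1)) • φ (mrg i b) e)
      + ((-1 : ℤ) ^ (k + 1)) •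
          (MulOpposite.op (b (Fin.last k)) • φ (fun j => b j.castSucc) e) := rfl

/-- For a projective right `A`-module `E` with dual basis
`{e_i}, {ε^i}`, the maps `h^k` give a homotopy: `δ^{k-1} ∘ h^k + h^{k+1} ∘ δ^k = id` on
`HC^k(A, End_K(E))` for all `k ≥ 1`; consequently every Hochschild `k`-cocycle (`k ≥ 1`)
is the coboundary `φ = δ(h^k φ)`, i.e. `HH^k(A, End_K(E)) = 0` for `k ≥ 1`. -/
theorem projective_module_homotopy [SMulCommClass K Aᵐᵒᵖ E]
    (eb : ι → E) (ε : ι → (E →ₗ[K] A))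
    (hεA : ∀ (i : ι) (a : A) (e : E), ε i (MulOpposite.op a • e) = ε i e * a)
    (hfin : ∀ e : E, (Function.support fun i => ε i e).Finite)
    (hdual : ∀ e : E, ∑ᶠ i, MulOpposite.op (ε i e) • eb i = e)
    (k : ℕ) (φ : MultilinearMap K (fun _ : Fin (k+1) => A) (E →ₗ[K] E)) :
    (∀ (a : Fin (k+1) → A) (e : E),
        hdelM k (homM eb ε k (fun x => ⇑(φ x))) a e
          + homM eb ε (k+1) (hdelM (k+1) (fun x => ⇑(φ x))) a e = φ a e)
    ∧ ((∀ (a : Fin (k+2) → A) (e : E), hdelM (k+1) (fun x => ⇑(φ x)) a e = 0) →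
        ∀ (a : Fin (k+1) → A) (e : E),
          φ a e = hdelM k (homM eb ε k (fun x => ⇑(φ x))) a e) := by
  classical
  have key : ∀ (a : Fin (k+1) → A) (e : E),
      hdelM k (homM eb ε k (fun x => ⇑(φ x))) a e
        + homM eb ε (k+1) (hdelM (k+1) (fun x => ⇑(φ x))) a e = φ a e := by
    intro a e
    set s : Finset ι := (hfin e).toFinset with hs
    have tosum : ∀ (F : ι → E), (∀ i, ε i e = 0 → F i = 0) → ∑ᶠ i, F i = ∑ i ∈ s, F i := by
      intro F hF
      refine finsum_eq_finset_sum_of_support_subset F ?_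
      intro i hi
      simp only [Function.mem_support] at hi
      simp only [Finset.coe_sort_coe, Finset.mem_coe, hs, Set.Finite.mem_toFinset,
        Function.mem_support]
      intro h0
      exact hi (hF i h0)
    have φz : ∀ (m : Fin (k+1) → A) (x : E), m 0 = 0 → φ m x = 0 := by
      intro m x h
      rw [φ.map_coord_zero (0 : Fin (k+1)) h]
      rfl
    have Dexp : ∀ (c : A) (x : E),
        hdelM (k+1) (fun m => ⇑(φ m)) (Fin.cons c a) x
          = φ a (MulOpposite.op c • x)
            - φ (Fin.cons (c * a 0) (fun j => a j.succ)) x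
            - ∑ t : Fin k, ((-1:ℤ)^((t:ℕ)+1)) • φ (Fin.cons c (mrg t a)) x
            - ((-1:ℤ)^(k+1)) •
                (MulOpposite.op (a (Fin.last k)) •
                  φ (Fin.cons c (fun j => a j.castSucc)) x) := by
      intro c x
      rw [hdelM_eq, cons_tail, Fin.cons_zero, cons_last, cons_castSucc, Fin.sum_univ_succ]
      have sgn : ∀ t : Fin k,
          ((-1:ℤ)^(((t.succ : Fin (k+1)) : ℕ)+1)) • φ (mrg t.succ (Fin.cons c a)) x
            = -(((-1:ℤ)^((t:ℕ)+1)) • φ (Fin.cons c (mrg t a)) x) := by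
        intro t
        rw [mrg_cons_succ, Fin.val_succ, pow_succ, mul_neg, mul_one, neg_smul]
      rw [Finset.sum_congr rfl (fun t _ => sgn t), mrg_cons_zero,
        show ((-1:ℤ)^(((0 : Fin (k+1)):ℕ)+1)) = -1 by norm_num,
        show ((-1:ℤ)^(k+1+1)) = -((-1:ℤ)^(k+1)) by rw [pow_succ]; ring]
      simp only [neg_smul, one_smul, Finset.sum_neg_distrib]
      abel
    have h1 : homM eb ε k (fun x => ⇑(φ x)) (fun j => a j.succ) (MulOpposite.op (a 0) • e)
        = ∑ i ∈ s, φ (Fin.cons (ε i e * a 0) (fun j => a j.succ)) (eb i) := by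
      show (∑ᶠ i, φ (Fin.cons (ε i (MulOpposite.op (a 0) • e)) (fun j => a j.succ)) (eb i)) = _
      rw [finsum_congr (fun i => by rw [hεA])]
      exact tosum _ (fun i h => φz _ _ (by simp [h]))
    have h2 : ∀ t : Fin k, homM eb ε k (fun x => ⇑(φ x)) (mrg t a) e
        = ∑ i ∈ s, φ (Fin.cons (ε i e) (mrg t a)) (eb i) := by
      intro t
      exact tosum _ (fun i h => φz _ _ (by simp [h]))
    have h3 : homM eb ε k (fun x => ⇑(φ x)) (fun j => a j.castSucc) e
        = ∑ i ∈ s, φ (Fin.cons (ε i e) (fun j => a j.castSucc)) (eb i) := by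
      exact tosum _ (fun i h => φz _ _ (by simp [h]))
    have h4 : homM eb ε (k+1) (hdelM (k+1) (fun x => ⇑(φ x))) a e
        = ∑ i ∈ s, (φ a (MulOpposite.op (ε i e) • eb i)
            - φ (Fin.cons (ε i e * a 0) (fun j => a j.succ)) (eb i)
            - ∑ t : Fin k, ((-1:ℤ)^((t:ℕ)+1)) • φ (Fin.cons (ε i e) (mrg t a)) (eb i)
            - ((-1:ℤ)^(k+1)) •
                (MulOpposite.op (a (Fin.last k)) •
                  φ (Fin.cons (ε i e) (fun j => a j.castSucc)) (eb i))) := by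
      have step : ∀ i : ι, hdelM (k+1) (fun x => ⇑(φ x)) (Fin.cons (ε i e) a) (eb i)
          = φ a (MulOpposite.op (ε i e) • eb i)
            - φ (Fin.cons (ε i e * a 0) (fun j => a j.succ)) (eb i)
            - ∑ t : Fin k, ((-1:ℤ)^((t:ℕ)+1)) • φ (Fin.cons (ε i e) (mrg t a)) (eb i)
            - ((-1:ℤ)^(k+1)) •
                (MulOpposite.op (a (Fin.last k)) •
                  φ (Fin.cons (ε i e) (fun j => a j.castSucc)) (eb i)) := fun i => Dexp _ _
      show (∑ᶠ i, hdelM (k+1) (fun x => ⇑(φ x)) (Fin.cons (ε i e) a) (eb i)) = _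
      rw [finsum_congr step]
      refine tosum _ (fun i h => ?_)
      rw [h]
      have z2 : φ (Fin.cons (0:A) (fun j => a j.succ)) (eb i) = 0 :=
        φz _ _ (by simp)
      have z3 : ∀ t : Fin k, φ (Fin.cons (0:A) (mrg t a)) (eb i) = 0 :=
        fun t => φz _ _ (by simp)
      have z4 : φ (Fin.cons (0:A) (fun j => a j.castSucc)) (eb i) = 0 :=
        φz _ _ (by simp)
      simp [z2, z3, z4]
    have hde : (∑ i ∈ s, MulOpposite.op (ε i e) • eb i) = e := by
      rw [← tosum _ (fun i h => by rw [h]; simp)]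
      exact hdual e
    rw [hdelM_eq, h1, h3, h4]
    rw [Finset.sum_congr rfl (fun (t : Fin k) _ => congrArg (fun z => ((-1:ℤ)^((t:ℕ)+1)) • z) (h2 t))]
    rw [Finset.smul_sum, Finset.smul_sum]
    simp only [Finset.smul_sum]
    rw [Finset.sum_comm]
    rw [← Finset.sum_add_distrib, ← Finset.sum_add_distrib, ← Finset.sum_add_distrib]
    have per : ∀ i ∈ s,
        (φ (Fin.cons (ε i e * a 0) (fun j => a j.succ)) (eb i)
          + ∑ t : Fin k, ((-1:ℤ)^((t:ℕ)+1)) • φ (Fin.cons (ε i e) (mrg t a)) (eb i)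
          + ((-1:ℤ)^(k+1)) •
              (MulOpposite.op (a (Fin.last k)) •
                φ (Fin.cons (ε i e) (fun j => a j.castSucc)) (eb i))
          + (φ a (MulOpposite.op (ε i e) • eb i)
            - φ (Fin.cons (ε i e * a 0) (fun j => a j.succ)) (eb i)
            - ∑ t : Fin k, ((-1:ℤ)^((t:ℕ)+1)) • φ (Fin.cons (ε i e) (mrg t a)) (eb i)
            - ((-1:ℤ)^(k+1)) •
                (MulOpposite.op (a (Fin.last k)) •
                  φ (Fin.cons (ε i e) (fun j => a j.castSucc)) (eb i))))
          = φ a (MulOpposite.op (ε i e) • eb i) := by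
      intro i _
      abel
    rw [Finset.sum_congr rfl per, ← map_sum, hde]
  refine ⟨key, fun hz a e => ?_⟩
  have h0 : homM eb ε (k+1) (hdelM (k+1) (fun x => ⇑(φ x))) a e = 0 := by
    show (∑ᶠ i, hdelM (k+1) (fun x => ⇑(φ x)) (Fin.cons (ε i e) a) (eb i)) = 0
    simp [hz]
  have := key a e
  rw [h0, add_zero] at this
  exact this.symm

end Stmt14
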